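/- Fix a tuple y = (y_1, ..., y_{n-1}) of nonnegative integers (n ≥ 1). Define the children of y to be the tuples (y_1, ..., y_{n-1}, 0) together with (y_1, ..., y_{n-2}, y_{n-1} - i, i+1) for 0 ≤ i ≤ y_{n-1}. Then a tuple x ∈ ℕ^n satisfies x_1 + ... + x_k ≤ k for all 1 ≤ k ≤ n if and only if x is a child of some y ∈ ℕ^{n-1} with y_1 + ... + y_k ≤ k for all 1 ≤ k ≤ n-1, and each x is a child of exactly one such y. -/

import Mathlib

lemma Iic_castSucc' {n : ℕ} (j : Fin n) :
    Finset.Iic j.castSucc = (Finset.Iic j).map Fin.castSuccEmb := by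
  ext a
  simp only [Finset.mem_map, Finset.mem_Iic, Fin.castSuccEmb, Fin.le_def,
    RelEmbedding.coe_toEmbedding, Fin.castSuccOrderEmb, OrderEmbedding.coe_ofStrictMono]
  constructor
  · intro h
    refine ⟨⟨a.val, by have := j.isLt; simp at h ⊢; omega⟩, by simp at h ⊢; omega, by ext; simp⟩
  · rintro ⟨b, hb, rfl⟩
    simpa using hb

lemma sum_Iic_castSucc' {n : ℕ} (f : Fin (n + 1) → ℕ) (j : Fin n) :
    ∑ i ∈ Finset.Iic j.castSucc, f i = ∑ i ∈ Finset.Iic j, f i.castSucc := by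
  rw [Iic_castSucc', Finset.sum_map]
  rfl

lemma Iic_last' {n : ℕ} : Finset.Iic (Fin.last n) = Finset.univ := by
  ext a; simp [Fin.le_last]



/-- `x ∈ ℕ^{n}` (with `n = m + 2`) is a *child* of `y ∈ ℕ^{n-1}` if either
`x = (y_1, ..., y_{n-1}, 0)`, or `x = (y_1, ..., y_{n-2}, y_{n-1} - i, i + 1)`
for some `0 ≤ i ≤ y_{n-1}`. -/
def IsChild {m : ℕ} (y : Fin (m + 1) → ℕ) (x : Fin (m + 2) → ℕ) : Prop :=
  x = Fin.snoc y 0 ∨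
    ∃ i ≤ y (Fin.last m),
      x = Fin.snoc (Function.update y (Fin.last m) (y (Fin.last m) - i)) (i + 1)

/-- A tuple `x ∈ ℕ^{m+2}` is a lattice point of `Π_{m+2}((1,...,1))` iff it is a child
of some lattice point `y` of `Π_{m+1}((1,...,1))`, and moreover `x` is a child of at
most one such `y`. -/
theorem stmt_16 (m : ℕ) (x : Fin (m + 2) → ℕ) :
    ((∀ k : Fin (m + 2), ∑ i ∈ Finset.Iic k, x i ≤ (k : ℕ) + 1) ↔
      ∃ y : Fin (m + 1) → ℕ,
        (∀ k : Fin (m + 1), ∑ i ∈ Finset.Iic k, y i ≤ (k : ℕ) + 1) ∧ IsChild y x) ∧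
    ∀ y₁ y₂ : Fin (m + 1) → ℕ,
      (∀ k : Fin (m + 1), ∑ i ∈ Finset.Iic k, y₁ i ≤ (k : ℕ) + 1) →
      (∀ k : Fin (m + 1), ∑ i ∈ Finset.Iic k, y₂ i ≤ (k : ℕ) + 1) →
      IsChild y₁ x → IsChild y₂ x → y₁ = y₂ := by
  constructor
  · constructor
    · -- forward
      intro hx
      by_cases h0 : x (Fin.last (m + 1)) = 0
      · refine ⟨Fin.init x, ?_, Or.inl ?_⟩
        · intro k
          have h := hx k.castSucc
          rw [sum_Iic_castSucc'] at h
          simpa [Fin.init] using h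
        · rw [← h0]; exact (Fin.snoc_init_self x).symm
      · obtain ⟨i, hi⟩ : ∃ i, x (Fin.last (m + 1)) = i + 1 :=
          ⟨_, (Nat.succ_pred_eq_of_pos (Nat.pos_of_ne_zero h0)).symm⟩
        set y : Fin (m + 1) → ℕ :=
          Function.update (Fin.init x) (Fin.last m) (x ((Fin.last m).castSucc) + i) with hy
        have hylast : y (Fin.last m) = x ((Fin.last m).castSucc) + i := by
          simp [hy]
        refine ⟨y, ?_, Or.inr ⟨i, by omega, ?_⟩⟩
        · intro k
          rcases eq_or_ne k (Fin.last m) with rfl | hk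
          · rw [Iic_last', Finset.sum_update_of_mem (Finset.mem_univ _),
              Finset.sdiff_singleton_eq_erase]
            have hxsum := hx (Fin.last (m + 1))
            rw [Iic_last', Fin.sum_univ_castSucc] at hxsum
            have hsplit : x ((Fin.last m).castSucc) +
                ∑ j ∈ Finset.univ.erase (Fin.last m), Fin.init x j
                = ∑ j : Fin (m + 1), x j.castSucc :=
              Finset.add_sum_erase _ (fun j : Fin (m + 1) => x j.castSucc) (Finset.mem_univ _)
            simp only [Fin.val_last] at hxsum ⊢
            omega
          · have : ∑ j ∈ Finset.Iic k, y j = ∑ j ∈ Finset.Iic k, Fin.init x j := by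
              refine Finset.sum_congr rfl fun j hj => ?_
              have hjk : j ≤ k := Finset.mem_Iic.mp hj
              have : j ≠ Fin.last m := by
                rintro rfl; exact hk (le_antisymm (Fin.le_last k) hjk)
              simp [hy, Function.update_of_ne this]
            rw [this]
            have h := hx k.castSucc
            rw [sum_Iic_castSucc'] at h
            simpa [Fin.init] using h
        · rw [hylast]
          have : Function.update y (Fin.last m) (x ((Fin.last m).castSucc) + i - i) = Fin.init x := by
            rw [hy, Function.update_idem, Nat.add_sub_cancel]
            exact Function.update_eq_self _ _
          rw [this, ← hi]
          exact (Fin.snoc_init_self x).symm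
    · -- backward
      rintro ⟨y, hy, hchild⟩ k
      induction k using Fin.lastCases with
      | last =>
        rw [Iic_last', Fin.sum_univ_castSucc]
        have hysum := hy (Fin.last m)
        rw [Iic_last'] at hysum
        rcases hchild with rfl | ⟨i, hi, rfl⟩
        · simp only [Fin.snoc_castSucc, Fin.snoc_last, Fin.val_last] at *
          omega
        · simp only [Fin.snoc_castSucc, Fin.snoc_last, Fin.val_last] at *
          rw [Finset.sum_update_of_mem (Finset.mem_univ _), Finset.sdiff_singleton_eq_erase]
          have hsplit : y (Fin.last m) + ∑ j ∈ Finset.univ.erase (Fin.last m), y j = ∑ j, y j := by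
            rw [Finset.add_sum_erase _ _ (Finset.mem_univ (Fin.last m))]
          omega
      | cast j =>
        rw [sum_Iic_castSucc']
        have hyj := hy j
        rcases hchild with rfl | ⟨i, hi, rfl⟩
        · simpa [Fin.snoc_castSucc] using hyj
        · simp only [Fin.snoc_castSucc, Fin.coe_castSucc]
          refine le_trans (Finset.sum_le_sum fun a _ => ?_) hyj
          rcases eq_or_ne a (Fin.last m) with rfl | ha
          · simp [Nat.sub_le]
          · simp [Function.update_of_ne ha]
  · -- uniqueness
    rintro y₁ y₂ _ _ (rfl | ⟨i₁, hi₁, h₁⟩) h₂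
    · rcases h₂ with h | ⟨i₂, hi₂, h₂⟩
      · funext j
        have := congrFun h j.castSucc
        simpa [Fin.snoc_castSucc] using this
      · have e1 := congrFun h₂ (Fin.last (m + 1))
        simp [Fin.snoc_last] at e1
    · rcases h₂ with rfl | ⟨i₂, hi₂, h₂⟩
      · have e1 := congrFun h₁ (Fin.last (m + 1))
        simp [Fin.snoc_last] at e1
      · have elast : i₁ = i₂ := by
          have e1 := congrFun h₁ (Fin.last (m + 1))
          have e2 := congrFun h₂ (Fin.last (m + 1))
          rw [h₂] at e1
          simp [Fin.snoc_last] at e1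
          omega
        subst elast
        funext j
        have e := congrFun h₂.symm j.castSucc
        rw [h₁] at e
        simp only [Fin.snoc_castSucc] at e
        rcases eq_or_ne j (Fin.last m) with rfl | hj
        · simp only [Function.update_self] at e
          omega
        · simpa [Function.update_of_ne hj] using e.symm
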